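/- There exist a constant C and a single decoder relation D : ℕ → ℕ → Bool with the following property: for every finite tree order (X, ≤) with n ≥ 2 elements and height d ≥ 2, there is an injective labeling L : X → ℕ such that L(x) ≤ C · n · d³ · (log₂ d)² for every x ∈ X, and for all u, v ∈ X, v covers u (i.e., v is the parent of u) if and only if D(L(v), L(u)) = true. (Equivalently: a parenthood-labeling scheme for the family of all rooted forests in which any node of an n-node forest of depth at most d gets a label of log₂ n + 3 log₂ d + 2 log₂ log₂ d + O(1) bits.) -/

import Mathlib

/-- A partial order is a *tree order* if any two incomparable elements
have no common upper bound. -/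
def IsTreeOrder (X : Type*) [PartialOrder X] : Prop :=
  ∀ x y z : X, x ≤ y → x ≤ z → (y ≤ z ∨ z ≤ y)

/-- The height of a partial order is at most `d`: every chain has at most
`d` elements. -/
def HeightLE (X : Type*) [PartialOrder X] (d : ℕ) : Prop :=
  ∀ c : Finset X, (∀ u ∈ c, ∀ v ∈ c, u ≤ v ∨ v ≤ u) → c.card ≤ d

namespace PSU

/-! ### Numeric preliminaries -/

def pv (n : ℕ) : ℕ := padicValNat 2 n

lemma pv_pow_mul_odd {j u : ℕ} (hu : u % 2 = 1) : pv (2 ^ j * u) = j := by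
  haveI : Fact (Nat.Prime 2) := ⟨Nat.prime_two⟩
  have hu0 : u ≠ 0 := by rintro rfl; simp at hu
  rw [pv, padicValNat.mul (by positivity) hu0, padicValNat.prime_pow,
    padicValNat.eq_zero_of_not_dvd, add_zero]
  omega

def seek (T j : ℕ) : ℕ :=
  (if (T / 2 ^ j + 1) % 2 = 1 then T / 2 ^ j + 1 else T / 2 ^ j + 2) * 2 ^ j

lemma seek_gt (T j : ℕ) : T < seek T j := by
  have hp : (0:ℕ) < 2 ^ j := Nat.pow_pos (by norm_num)
  have h1 : 2 ^ j * (T / 2 ^ j) + T % 2 ^ j = T := Nat.div_add_mod T (2 ^ j)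
  rw [mul_comm] at h1
  have h2 : T % 2 ^ j < 2 ^ j := Nat.mod_lt _ hp
  unfold seek
  split <;> (rw [add_mul]; omega)

lemma seek_le (T j : ℕ) : seek T j ≤ T + 2 ^ (j + 1) := by
  have h : T / 2 ^ j * 2 ^ j ≤ T := Nat.div_mul_le_self T (2 ^ j)
  have : (T / 2 ^ j + 2) * 2 ^ j ≤ T + 2 ^ (j + 1) := by
    rw [add_mul, pow_succ]; omega
  unfold seek
  split
  · calc (T / 2 ^ j + 1) * 2 ^ j ≤ (T / 2 ^ j + 2) * 2 ^ j := by gcongr <;> omega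
      _ ≤ _ := this
  · exact this

lemma pv_seek (T j : ℕ) : pv (seek T j) = j := by
  unfold seek
  split
  next h => rw [mul_comm]; exact pv_pow_mul_odd h
  next h => rw [mul_comm]; apply pv_pow_mul_odd; omega

/-! ### Encoding of labels -/

def enc (b f l a : ℕ) : ℕ := ((a * 2 ^ b + l) * 2 ^ (b + 6) + f) * 2 ^ (b + 1) + (2 ^ b - 1)

lemma enc_succ (b f l a : ℕ) :
    enc b f l a + 1 = 2 ^ b * (2 * ((a * 2 ^ b + l) * 2 ^ (b + 6) + f) + 1) := by
  have : (0:ℕ) < 2 ^ b := Nat.pow_pos (by norm_num)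
  unfold enc
  rw [pow_succ]
  ring_nf
  omega

lemma pv_enc_succ (b f l a : ℕ) : pv (enc b f l a + 1) = b := by
  rw [enc_succ]; exact pv_pow_mul_odd (by omega)

lemma split_eq {B q₁ r₁ q₂ r₂ : ℕ} (h₁ : r₁ < B) (h₂ : r₂ < B)
    (h : q₁ * B + r₁ = q₂ * B + r₂) : q₁ = q₂ ∧ r₁ = r₂ := by
  have hB : 0 < B := by omega
  have e1 : (q₁ * B + r₁) / B = q₁ := by
    rw [mul_comm, Nat.mul_add_div hB, Nat.div_eq_of_lt h₁, add_zero]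
  have e2 : (q₂ * B + r₂) / B = q₂ := by
    rw [mul_comm, Nat.mul_add_div hB, Nat.div_eq_of_lt h₂, add_zero]
  have e3 : (q₁ * B + r₁) % B = r₁ := by
    rw [mul_comm, Nat.mul_add_mod, Nat.mod_eq_of_lt h₁]
  have e4 : (q₂ * B + r₂) % B = r₂ := by
    rw [mul_comm, Nat.mul_add_mod, Nat.mod_eq_of_lt h₂]
  rw [h] at e1 e3
  exact ⟨e1.symm.trans e2, e3.symm.trans e4⟩

lemma enc_inj {b₁ f₁ l₁ a₁ b₂ f₂ l₂ a₂ : ℕ}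
    (hf₁ : f₁ < 2 ^ (b₁ + 6)) (hl₁ : l₁ < 2 ^ b₁)
    (hf₂ : f₂ < 2 ^ (b₂ + 6)) (hl₂ : l₂ < 2 ^ b₂)
    (h : enc b₁ f₁ l₁ a₁ = enc b₂ f₂ l₂ a₂) :
    b₁ = b₂ ∧ f₁ = f₂ ∧ l₁ = l₂ ∧ a₁ = a₂ := by
  have hb : b₁ = b₂ := by
    have := congrArg (fun n => pv (n + 1)) h
    simpa [pv_enc_succ] using this
  subst hb
  have h1 : ((a₁ * 2 ^ b₁ + l₁) * 2 ^ (b₁ + 6) + f₁) = ((a₂ * 2 ^ b₁ + l₂) * 2 ^ (b₁ + 6) + f₂) := by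
    have := enc_succ b₁ f₁ l₁ a₁
    have := enc_succ b₁ f₂ l₂ a₂
    have h2 : (0:ℕ) < 2 ^ b₁ := Nat.pow_pos (by norm_num)
    have := congrArg (· + 1) h
    simp only [enc_succ] at this
    have := Nat.eq_of_mul_eq_mul_left h2 this
    omega
  obtain ⟨h3, hf⟩ := split_eq hf₁ hf₂ h1
  obtain ⟨ha, hl⟩ := split_eq hl₁ hl₂ h3
  exact ⟨rfl, hf, hl, ha⟩


/-! ### Tree orders -/

section TreeOrder
variable {X : Type} [Fintype X] [PartialOrder X]

open Classical in
noncomputable def downset (v : X) : Finset X := Finset.univ.filter (· ≤ v)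

lemma mem_downset {v y : X} : y ∈ downset v ↔ y ≤ v := by
  simp [downset]

open Classical in
noncomputable def lvl (v : X) : ℕ := (Finset.univ.filter (v ≤ ·)).card

lemma lvl_pos (v : X) : 0 < lvl v := by
  classical
  apply Finset.card_pos.2
  exact ⟨v, by simp [lvl]⟩

lemma lvl_le_of_height {d : ℕ} (hH : HeightLE X d) (hT : IsTreeOrder X) (v : X) : lvl v ≤ d := by
  classical
  apply hH
  intro a ha b hb
  simp only [lvl, Finset.mem_filter] at ha hb
  exact hT v a b ha.2 hb.2

lemma lvl_anti {u v : X} (h : u ≤ v) : lvl v ≤ lvl u := by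
  classical
  apply Finset.card_le_card
  intro a ha
  simp only [lvl, Finset.mem_filter, Finset.mem_univ, true_and] at *
  exact le_trans h ha

lemma lvl_covby (hT : IsTreeOrder X) {u v : X} (h : u ⋖ v) : lvl u = lvl v + 1 := by
  classical
  have hset : (Finset.univ.filter (u ≤ ·)) = insert u (Finset.univ.filter (v ≤ ·)) := by
    ext a
    simp only [Finset.mem_filter, Finset.mem_insert, Finset.mem_univ, true_and]
    constructor
    · intro ha
      rcases eq_or_lt_of_le ha with h1 | h1
      · left; exact h1.symm
      · right
        rcases hT u a v (le_of_lt h1) (le_of_lt h.1) with h2 | h2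
        · rcases eq_or_lt_of_le h2 with h3 | h3
          · exact h3 ▸ le_refl _
          · exact absurd h3 (h.2 h1)
        · exact h2
    · rintro (rfl | ha)
      · exact le_refl _
      · exact le_trans (le_of_lt h.1) ha
  have hnot : u ∉ Finset.univ.filter (v ≤ ·) := by
    simp only [Finset.mem_filter, Finset.mem_univ, true_and]
    intro hvu
    exact absurd (lt_of_le_of_lt hvu h.1) (lt_irrefl v)
  rw [lvl, lvl, hset, Finset.card_insert_of_notMem hnot]

lemma eq_of_le_of_lvl_le {u v : X} (h : u ≤ v) (h2 : lvl u ≤ lvl v) : u = v := by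
  classical
  by_contra hne
  have hlt : u < v := lt_of_le_of_ne h hne
  have : lvl v < lvl u := by
    apply Finset.card_lt_card
    constructor
    · intro a ha
      simp only [Finset.mem_filter, Finset.mem_univ, true_and] at *
      exact le_trans h ha
    · intro hsub2
      have : u ∈ Finset.univ.filter (v ≤ ·) := hsub2 (by simp)
      simp only [Finset.mem_filter, Finset.mem_univ, true_and] at this
      exact absurd (lt_of_le_of_lt this hlt) (lt_irrefl v)
  omega

/-- Any `y < v` lies below some cover-child of `v`. -/
lemma exists_covby_above (hT : IsTreeOrder X) {y v : X} (h : y < v) :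
    ∃ c, c ⋖ v ∧ y ≤ c := by
  classical
  have hne : (Finset.univ.filter (fun z => y ≤ z ∧ z < v)).Nonempty :=
    ⟨y, by simp [h]⟩
  obtain ⟨c, hc, hmax⟩ : ∃ c ∈ Finset.univ.filter (fun z => y ≤ z ∧ z < v), ∀ x' ∈ Finset.univ.filter (fun z => y ≤ z ∧ z < v), ¬c < x' := by
    obtain ⟨c, hc⟩ := Finset.exists_maximal hne
    exact ⟨c, hc.1, fun x' hx' hlt => lt_irrefl _ (lt_of_lt_of_le hlt (hc.2 hx' hlt.le))⟩
  simp only [Finset.mem_filter, Finset.mem_univ, true_and] at hc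
  refine ⟨c, ⟨hc.2, ?_⟩, hc.1⟩
  intro w hw hwv
  have hwmem : w ∈ Finset.univ.filter (fun z => y ≤ z ∧ z < v) := by
    simp only [Finset.mem_filter, Finset.mem_univ, true_and]
    exact ⟨le_trans hc.1 (le_of_lt hw), hwv⟩
  exact hmax w hwmem hw

lemma exists_root (hT : IsTreeOrder X) (x : X) : ∃ r, IsMax r ∧ x ≤ r := by
  classical
  have hne : (Finset.univ.filter (fun z => x ≤ z)).Nonempty := ⟨x, by simp⟩
  obtain ⟨r, hr, hmax⟩ : ∃ c ∈ Finset.univ.filter (fun z => x ≤ z), ∀ x' ∈ Finset.univ.filter (fun z => x ≤ z), ¬c < x' := by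
    obtain ⟨c, hc⟩ := Finset.exists_maximal hne
    exact ⟨c, hc.1, fun x' hx' hlt => lt_irrefl _ (lt_of_lt_of_le hlt (hc.2 hx' hlt.le))⟩
  simp only [Finset.mem_filter, Finset.mem_univ, true_and] at hr
  refine ⟨r, ?_, hr⟩
  intro w hw
  by_contra hnw
  have hwmem : w ∈ Finset.univ.filter (fun z => x ≤ z) := by
    simp only [Finset.mem_filter, Finset.mem_univ, true_and]
    exact le_trans hr hw
  exact hmax w hwmem (lt_of_le_not_ge hw hnw)

lemma root_unique (hT : IsTreeOrder X) {r₁ r₂ x : X} (h₁ : IsMax r₁) (h₂ : IsMax r₂)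
    (hx₁ : x ≤ r₁) (hx₂ : x ≤ r₂) : r₁ = r₂ := by
  rcases hT x r₁ r₂ hx₁ hx₂ with h | h
  · exact le_antisymm h (h₁ h)
  · exact le_antisymm (h₂ h) h

lemma downset_covby_disjoint (hT : IsTreeOrder X) {u₁ u₂ v y : X}
    (h₁ : u₁ ⋖ v) (h₂ : u₂ ⋖ v) (hne : u₁ ≠ u₂) (hy₁ : y ≤ u₁) (hy₂ : y ≤ u₂) : False := by
  rcases hT y u₁ u₂ hy₁ hy₂ with h | h
  · exact h₁.2 (lt_of_le_of_ne h hne) h₂.1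
  · exact h₂.2 (lt_of_le_of_ne h (Ne.symm hne)) h₁.1

end TreeOrder


/-! ### Rose trees -/

inductive RTX (X : Type) : Type where
  | node : X → List (RTX X) → RTX X

namespace RTX
variable {X : Type}

def rootX : RTX X → X | .node x _ => x

structure Ent (X : Type) where
  x : X
  a : ℕ
  lv : ℕ
  f : ℕ
  z : ℕ

section Defs
variable (b : ℕ)

def jOf (N : ℕ) : ℕ := Nat.log 2 N - (b + 4)
def fOf (N : ℕ) : ℕ := N / 2 ^ jOf b N + 1
def zOf (N : ℕ) : ℕ := fOf b N * 2 ^ jOf b N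
def allowOf (N : ℕ) : ℕ := zOf b N + 2 ^ (jOf b N + 1)

mutual
def Nv : RTX X → ℕ
  | .node _ cs => 1 + NvL cs
def NvL : List (RTX X) → ℕ
  | [] => 0
  | c :: cs => allowOf b (Nv c) + NvL cs
end

def jv (t : RTX X) : ℕ := jOf b (Nv b t)
def fv (t : RTX X) : ℕ := fOf b (Nv b t)
def zv (t : RTX X) : ℕ := zOf b (Nv b t)
def allow (t : RTX X) : ℕ := allowOf b (Nv b t)

mutual
def cnt : RTX X → ℕ
  | .node _ cs => 1 + cntL cs
def cntL : List (RTX X) → ℕ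
  | [] => 0
  | c :: cs => cnt c + cntL cs
end

mutual
def htT : RTX X → ℕ
  | .node _ cs => htL cs + 1
def htL : List (RTX X) → ℕ
  | [] => 0
  | c :: cs => max (htT c) (htL cs)
end

def endT (t : RTX X) (T : ℕ) : ℕ := seek T (jv b t) + zv b t

def endL : List (RTX X) → ℕ → ℕ
  | [], T => T
  | c :: cs, T => endL cs (endT b c T)

mutual
def place : RTX X → ℕ → ℕ → List (Ent X)
  | .node x cs, T, ℓ =>
      ⟨x, seek T (jv b (.node x cs)), ℓ, fv b (.node x cs), zv b (.node x cs)⟩ ::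
        placeL cs (seek T (jv b (.node x cs)) + 1) (ℓ + 1)
def placeL : List (RTX X) → ℕ → ℕ → List (Ent X)
  | [], _, _ => []
  | c :: cs, T, ℓ => place c T ℓ ++ placeL cs (endT b c T) ℓ
end

mutual
def nodesT : RTX X → List X
  | .node x cs => x :: nodesL cs
def nodesL : List (RTX X) → List X
  | [] => []
  | c :: cs => nodesT c ++ nodesL cs
end

mutual
def cpT : RTX X → List (X × X)
  | .node x cs => cs.map (fun c => (x, rootX c)) ++ cpL cs
def cpL : List (RTX X) → List (X × X)
  | [] => []
  | c :: cs => cpT c ++ cpL cs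
end

end Defs

section Arith
variable (b : ℕ)

lemma zOf_ge (N : ℕ) : N ≤ zOf b N := by
  unfold zOf fOf
  have h1 : 2 ^ jOf b N * (N / 2 ^ jOf b N) + N % 2 ^ jOf b N = N := Nat.div_add_mod _ _
  have h2 : N % 2 ^ jOf b N < 2 ^ jOf b N := Nat.mod_lt _ (Nat.pow_pos (by norm_num))
  rw [mul_comm] at h1
  rw [add_mul]
  omega

lemma zOf_pos (N : ℕ) : 0 < zOf b N := by
  unfold zOf fOf
  positivity

lemma fOf_pos (N : ℕ) : 0 < fOf b N := Nat.succ_pos _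

lemma fOf_lt (N : ℕ) : fOf b N < 2 ^ (b + 6) := by
  unfold fOf jOf
  have hone : (1:ℕ) < 2 ^ (b + 6) := by
    calc (1:ℕ) < 2 ^ 6 := by norm_num
      _ ≤ 2 ^ (b + 6) := Nat.pow_le_pow_right (by norm_num) (by omega)
  rcases Nat.eq_zero_or_pos N with rfl | hN
  · simpa using hone
  have hlog : N < 2 ^ (Nat.log 2 N + 1) := Nat.lt_pow_succ_log_self (by norm_num) N
  have hdiv : N / 2 ^ (Nat.log 2 N - (b + 4)) < 2 ^ (b + 5) := by
    rw [Nat.div_lt_iff_lt_mul (Nat.pow_pos (by norm_num))]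
    calc N < 2 ^ (Nat.log 2 N + 1) := hlog
      _ ≤ 2 ^ (b + 5) * 2 ^ (Nat.log 2 N - (b + 4)) := by
          rw [← pow_add]
          apply Nat.pow_le_pow_right (by norm_num)
          omega
  have : (2:ℕ) ^ (b + 5) + 1 ≤ 2 ^ (b + 6) := by
    have : (2:ℕ) ^ (b + 6) = 2 ^ (b + 5) + 2 ^ (b + 5) := by rw [pow_succ]; ring
    have h5 : (0:ℕ) < 2 ^ (b + 5) := Nat.pow_pos (by norm_num)
    omega
  omega

/-- if the exponent is nonzero then `2 ^ jOf * 2 ^ (b+4) ≤ N` -/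
lemma pow_jOf_le {N : ℕ} (h : jOf b N ≠ 0) : 2 ^ jOf b N * 2 ^ (b + 4) ≤ N := by
  unfold jOf at *
  have hN : N ≠ 0 := by
    rintro rfl
    simp at h
  have hlog : Nat.log 2 N ≥ b + 4 := by omega
  calc 2 ^ (Nat.log 2 N - (b + 4)) * 2 ^ (b + 4) = 2 ^ Nat.log 2 N := by
        rw [← pow_add]; congr 1; omega
    _ ≤ N := Nat.pow_log_le_self 2 hN

lemma Nv_pos (t : RTX X) : 0 < Nv b t := by
  rcases t with ⟨x, cs⟩
  rw [Nv]
  omega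

lemma Nv_le_zv (t : RTX X) : Nv b t ≤ zv b t := zOf_ge b _

lemma zv_pos (t : RTX X) : 0 < zv b t := zOf_pos b _

lemma NvL_cons (c : RTX X) (cs : List (RTX X)) :
    NvL b (c :: cs) = allow b c + NvL b cs := by rw [NvL]; rfl

lemma Nv_node (x : X) (cs : List (RTX X)) : Nv b (.node x cs) = 1 + NvL b cs := by rw [Nv]

end Arith

/-! ### Mutual induction principle -/

section Ind
variable {m1 : RTX X → Prop} {m2 : List (RTX X) → Prop}

mutual
theorem indT (h1 : ∀ x cs, m2 cs → m1 (.node x cs)) (h2 : m2 [])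
    (h3 : ∀ c cs, m1 c → m2 cs → m2 (c :: cs)) : ∀ t, m1 t
  | .node x cs => h1 x cs (indL h1 h2 h3 cs)
theorem indL (h1 : ∀ x cs, m2 cs → m1 (.node x cs)) (h2 : m2 [])
    (h3 : ∀ c cs, m1 c → m2 cs → m2 (c :: cs)) : ∀ cs, m2 cs
  | [] => h2
  | c :: cs => h3 c cs (indT h1 h2 h3 c) (indL h1 h2 h3 cs)
end

theorem tree_list_ind (h1 : ∀ x cs, m2 cs → m1 (.node x cs)) (h2 : m2 [])
    (h3 : ∀ c cs, m1 c → m2 cs → m2 (c :: cs)) : (∀ t, m1 t) ∧ (∀ cs, m2 cs) :=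
  ⟨indT h1 h2 h3, indL h1 h2 h3⟩

end Ind

section PlaceLemmas
variable (b : ℕ)

lemma endT_eq (t : RTX X) (T : ℕ) : endT b t T = seek T (jv b t) + zv b t := rfl

lemma lt_endT (t : RTX X) (T : ℕ) : T < endT b t T := by
  have h := seek_gt T (jv b t)
  rw [endT_eq]
  omega

lemma endT_le (t : RTX X) (T : ℕ) : endT b t T ≤ T + allow b t := by
  have := seek_le T (jv b t)
  rw [endT_eq]
  unfold allow allowOf
  have : zv b t = zOf b (Nv b t) := rfl
  unfold jv at *
  omega

lemma le_endL (cs : List (RTX X)) (T : ℕ) : T ≤ endL b cs T := by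
  induction cs generalizing T with
  | nil => rw [endL]
  | cons c cs ih =>
    rw [endL]
    exact le_trans (le_of_lt (lt_endT b c T)) (ih _)

lemma endL_le (cs : List (RTX X)) (T : ℕ) : endL b cs T ≤ T + NvL b cs := by
  induction cs generalizing T with
  | nil => rw [endL, NvL]; omega
  | cons c cs ih =>
    rw [endL, NvL_cons]
    calc endL b cs (endT b c T) ≤ endT b c T + NvL b cs := ih _
      _ ≤ T + allow b c + NvL b cs := by have := endT_le b c T; omega
      _ = T + (allow b c + NvL b cs) := by omega

lemma place_eq (x : X) (cs : List (RTX X)) (T ℓ : ℕ) :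
    place b (.node x cs) T ℓ =
      ⟨x, seek T (jv b (.node x cs)), ℓ, fv b (.node x cs), zv b (.node x cs)⟩ ::
        placeL b cs (seek T (jv b (.node x cs)) + 1) (ℓ + 1) := by
  rw [place]

lemma placeL_nil (T ℓ : ℕ) : placeL b ([] : List (RTX X)) T ℓ = [] := by rw [placeL]

lemma placeL_cons (c : RTX X) (cs : List (RTX X)) (T ℓ : ℕ) :
    placeL b (c :: cs) T ℓ = place b c T ℓ ++ placeL b cs (endT b c T) ℓ := by
  rw [placeL]

lemma keys_place :
    (∀ t : RTX X, ∀ T ℓ, (place b t T ℓ).map Ent.x = nodesT t) ∧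
    (∀ cs : List (RTX X), ∀ T ℓ, (placeL b cs T ℓ).map Ent.x = nodesL cs) := by
  apply tree_list_ind
  · intro x cs ih T ℓ
    rw [place_eq, nodesT, List.map_cons, ih]
  · intro T ℓ
    rw [placeL_nil, nodesL]
    rfl
  · intro c cs ih1 ih2 T ℓ
    rw [placeL_cons, nodesL, List.map_append, ih1, ih2]

lemma place_bounds :
    (∀ t : RTX X, ∀ T ℓ, ∀ e ∈ place b t T ℓ, T ≤ e.a ∧ e.a + e.z ≤ endT b t T ∧ 0 < e.z) ∧
    (∀ cs : List (RTX X), ∀ T ℓ, ∀ e ∈ placeL b cs T ℓ,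
      T ≤ e.a ∧ e.a + e.z ≤ endL b cs T ∧ 0 < e.z) := by
  apply tree_list_ind
  · intro x cs ih T ℓ e he
    rw [place_eq] at he
    have ha : seek T (jv b (RTX.node x cs)) + zv b (RTX.node x cs) = endT b (RTX.node x cs) T := rfl
    rcases List.mem_cons.1 he with rfl | he
    · refine ⟨le_of_lt (seek_gt _ _), by simpa using ha.le, zv_pos b _⟩
    · obtain ⟨h1, h2, h3⟩ := ih _ _ e he
      refine ⟨?_, ?_, h3⟩
      · have := seek_gt T (jv b (RTX.node x cs)); omega
      · have h4 := endL_le b cs (seek T (jv b (RTX.node x cs)) + 1)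
        have h5 : 1 + NvL b cs = Nv b (RTX.node x cs) := (Nv_node b x cs).symm
        have h6 := Nv_le_zv b (RTX.node x cs)
        rw [← ha]
        omega
  · intro T ℓ e he
    rw [placeL_nil] at he
    simp at he
  · intro c cs ih1 ih2 T ℓ e he
    rw [placeL_cons] at he
    rw [endL]
    rcases List.mem_append.1 he with he | he
    · obtain ⟨h1, h2, h3⟩ := ih1 _ _ e he
      exact ⟨h1, le_trans h2 (le_endL b cs _), h3⟩
    · obtain ⟨h1, h2, h3⟩ := ih2 _ _ e he
      exact ⟨le_trans (le_of_lt (lt_endT b c T)) h1, h2, h3⟩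

lemma place_ent :
    (∀ t : RTX X, ∀ T ℓ, ∀ e ∈ place b t T ℓ,
      e.f * 2 ^ pv e.a = e.z ∧ 0 < e.f ∧ e.f < 2 ^ (b + 6) ∧ ℓ ≤ e.lv ∧ e.lv < ℓ + htT t ∧
      (e.lv = ℓ → e.x = rootX t)) ∧
    (∀ cs : List (RTX X), ∀ T ℓ, ∀ e ∈ placeL b cs T ℓ,
      e.f * 2 ^ pv e.a = e.z ∧ 0 < e.f ∧ e.f < 2 ^ (b + 6) ∧ ℓ ≤ e.lv ∧ e.lv < ℓ + htL cs ∧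
      (e.lv = ℓ → ∃ c ∈ cs, e.x = rootX c)) := by
  apply tree_list_ind
  · intro x cs ih T ℓ e he
    rw [place_eq] at he
    rcases List.mem_cons.1 he with rfl | he
    · refine ⟨?_, fOf_pos b _, fOf_lt b _, le_refl _, ?_, fun _ => rfl⟩
      · show fv b _ * 2 ^ pv (seek T (jv b _)) = zv b _
        rw [pv_seek]
        rfl
      · show ℓ < ℓ + htT (RTX.node x cs)
        rw [htT]
        omega
    · obtain ⟨h1, h2, h3, h4, h5, h6⟩ := ih _ _ e he
      refine ⟨h1, h2, h3, by omega, ?_, by omega⟩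
      rw [htT]
      omega
  · intro T ℓ e he
    rw [placeL_nil] at he
    simp at he
  · intro c cs ih1 ih2 T ℓ e he
    rw [placeL_cons] at he
    rcases List.mem_append.1 he with he | he
    · obtain ⟨h1, h2, h3, h4, h5, h6⟩ := ih1 _ _ e he
      refine ⟨h1, h2, h3, h4, ?_, fun h => ⟨c, List.mem_cons_self, h6 h⟩⟩
      rw [htL]
      omega
    · obtain ⟨h1, h2, h3, h4, h5, h6⟩ := ih2 _ _ e he
      refine ⟨h1, h2, h3, h4, ?_, fun h => ?_⟩
      · rw [htL]; omega
      · obtain ⟨c', hc', he'⟩ := h6 h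
        exact ⟨c', List.mem_cons_of_mem c hc', he'⟩

lemma head_slot (cs : List (RTX X)) (T ℓ : ℕ) (c : RTX X) (hc : c ∈ cs) :
    ∃ T', T ≤ T' ∧
      (⟨rootX c, seek T' (jv b c), ℓ, fv b c, zv b c⟩ : Ent X) ∈ placeL b cs T ℓ ∧
      endT b c T' ≤ endL b cs T := by
  induction cs generalizing T with
  | nil => simp at hc
  | cons c₀ cs ih =>
    rw [placeL_cons, endL]
    rcases List.mem_cons.1 hc with rfl | hc
    · refine ⟨T, le_refl _, ?_, le_endL b cs _⟩
      apply List.mem_append_left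
      rcases c with ⟨x, cs₂⟩
      rw [place_eq]
      show _ ∈ _ :: _
      left
    · obtain ⟨T', h1, h2, h3⟩ := ih hc (T := endT b c₀ T)
      exact ⟨T', le_trans (le_of_lt (lt_endT b c₀ T)) h1, List.mem_append_right _ h2, h3⟩

lemma rootX_mem_nodesT (t : RTX X) : rootX t ∈ nodesT t := by
  rcases t with ⟨x, cs⟩
  rw [nodesT]
  exact List.mem_cons_self

lemma mem_nodesL_of_mem {c : RTX X} {cs : List (RTX X)} (hc : c ∈ cs) {y : X}
    (hy : y ∈ nodesT c) : y ∈ nodesL cs := by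
  induction cs with
  | nil => simp at hc
  | cons c₀ cs ih =>
    rw [nodesL]
    rcases List.mem_cons.1 hc with rfl | hc
    · exact List.mem_append_left _ hy
    · exact List.mem_append_right _ (ih hc)

lemma cp_mem :
    (∀ t : RTX X, ∀ p : X × X, p ∈ cpT t → p.1 ∈ nodesT t ∧ p.2 ∈ nodesT t) ∧
    (∀ cs : List (RTX X), ∀ p : X × X, p ∈ cpL cs → p.1 ∈ nodesL cs ∧ p.2 ∈ nodesL cs) := by
  apply tree_list_ind
  · intro x cs ih p hp
    rw [cpT] at hp
    rw [nodesT]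
    rcases List.mem_append.1 hp with hp | hp
    · obtain ⟨c, hc, rfl⟩ := List.mem_map.1 hp
      exact ⟨List.mem_cons_self,
        List.mem_cons_of_mem _ (mem_nodesL_of_mem hc (rootX_mem_nodesT c))⟩
    · obtain ⟨h1, h2⟩ := ih p hp
      exact ⟨List.mem_cons_of_mem _ h1, List.mem_cons_of_mem _ h2⟩
  · intro p hp
    rw [cpL] at hp
    simp at hp
  · intro c cs ih1 ih2 p hp
    rw [cpL] at hp
    rw [nodesL]
    rcases List.mem_append.1 hp with hp | hp
    · obtain ⟨h1, h2⟩ := ih1 p hp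
      exact ⟨List.mem_append_left _ h1, List.mem_append_left _ h2⟩
    · obtain ⟨h1, h2⟩ := ih2 p hp
      exact ⟨List.mem_append_right _ h1, List.mem_append_right _ h2⟩

/-- decoder condition on a pair of entries -/
def Cond (e₁ e₂ : Ent X) : Prop :=
  e₂.lv = e₁.lv + 1 ∧ e₁.a < e₂.a ∧ e₂.a < e₁.a + e₁.z

lemma key_mem {cs : List (RTX X)} {T ℓ : ℕ} {e : Ent X} (he : e ∈ placeL b cs T ℓ) :
    e.x ∈ nodesL cs := by
  rw [← (keys_place b).2 cs T ℓ]
  exact List.mem_map_of_mem he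

lemma place_iff :
    (∀ t : RTX X, ∀ T ℓ, (nodesT t).Nodup → ∀ e₁ ∈ place b t T ℓ, ∀ e₂ ∈ place b t T ℓ,
      (Cond e₁ e₂ ↔ (e₁.x, e₂.x) ∈ cpT t)) ∧
    (∀ cs : List (RTX X), ∀ T ℓ, (nodesL cs).Nodup →
      ∀ e₁ ∈ placeL b cs T ℓ, ∀ e₂ ∈ placeL b cs T ℓ,
      (Cond e₁ e₂ ↔ (e₁.x, e₂.x) ∈ cpL cs)) := by
  apply tree_list_ind
  · -- tree case
    intro x cs ih T ℓ hnd e₁ he₁ e₂ he₂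
    rw [nodesT] at hnd
    have hndx : x ∉ nodesL cs := (List.nodup_cons.1 hnd).1
    have hndcs : (nodesL cs).Nodup := (List.nodup_cons.1 hnd).2
    set a := seek T (jv b (RTX.node x cs)) with ha
    set hd : Ent X := ⟨x, a, ℓ, fv b (RTX.node x cs), zv b (RTX.node x cs)⟩ with hhd
    have hE : place b (RTX.node x cs) T ℓ = hd :: placeL b cs (a + 1) (ℓ + 1) := place_eq ..
    rw [hE] at he₁ he₂
    rw [cpT]
    rcases List.mem_cons.1 he₁ with rfl | he₁ <;> rcases List.mem_cons.1 he₂ with rfl | he₂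
    · -- both head
      constructor
      · rintro ⟨h1, -, -⟩
        simp [hhd] at h1
      · intro hmem
        exfalso
        rcases List.mem_append.1 hmem with hmem | hmem
        · obtain ⟨c, hc, hpair⟩ := List.mem_map.1 hmem
          have hx : rootX c = x := congrArg Prod.snd hpair
          exact hndx (hx ▸ mem_nodesL_of_mem hc (rootX_mem_nodesT c))
        · exact hndx ((cp_mem.2 cs _ hmem).1)
      -- (here hd.x = x definitionally)
    · -- e₁ head, e₂ in children
      have hent := (place_ent b).2 cs (a + 1) (ℓ + 1) e₂ he₂
      constructor
      · rintro ⟨h1, -, -⟩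
        have h1' : e₂.lv = ℓ + 1 := by simpa [hhd] using h1
        obtain ⟨c, hc, hx⟩ := hent.2.2.2.2.2 h1'
        exact List.mem_append_left _ (List.mem_map.2 ⟨c, hc, by simp [hhd, hx]⟩)
      · intro hmem
        rcases List.mem_append.1 hmem with hmem | hmem
        · obtain ⟨c, hc, hpair⟩ := List.mem_map.1 hmem
          have hx2 : e₂.x = rootX c := (congrArg Prod.snd hpair).symm
          obtain ⟨T', hT', hmem', hend'⟩ := head_slot b cs (a + 1) (ℓ + 1) c hc
          have hkeys : ((placeL b cs (a + 1) (ℓ + 1)).map Ent.x).Nodup := by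
            rw [(keys_place b).2]
            exact hndcs
          have he2eq : e₂ = ⟨rootX c, seek T' (jv b c), ℓ + 1, fv b c, zv b c⟩ := by
            exact List.inj_on_of_nodup_map hkeys he₂ hmem' hx2
          refine ⟨by simp [hhd, he2eq], ?_, ?_⟩
          · have := seek_gt T' (jv b c)
            simp only [he2eq, hhd]
            omega
          · have h1 : seek T' (jv b c) + zv b c = endT b c T' := rfl
            have h2 := endL_le b cs (a + 1)
            have h3 : 1 + NvL b cs = Nv b (RTX.node x cs) := (Nv_node b x cs).symm
            have h4 := Nv_le_zv b (RTX.node x cs)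
            have h5 := zv_pos b c
            simp only [he2eq, hhd]
            omega
        · exfalso
          exact hndx (cp_mem.2 cs _ hmem).1
    · -- e₁ in children, e₂ head
      have hent := (place_ent b).2 cs (a + 1) (ℓ + 1) e₁ he₁
      constructor
      · rintro ⟨h1, -, -⟩
        exfalso
        have : ℓ + 1 ≤ e₁.lv := hent.2.2.2.1
        have h2 : hd.lv = ℓ := rfl
        omega
      · intro hmem
        exfalso
        rcases List.mem_append.1 hmem with hmem | hmem
        · obtain ⟨c, hc, hpair⟩ := List.mem_map.1 hmem
          have hx : e₁.x = x := (congrArg Prod.fst hpair).symm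
          exact hndx (hx ▸ key_mem b he₁)
        · exact hndx (cp_mem.2 cs _ hmem).2
    · -- both in children
      have := ih (a + 1) (ℓ + 1) hndcs e₁ he₁ e₂ he₂
      rw [this]
      constructor
      · exact fun h => List.mem_append_right _ h
      · intro hmem
        rcases List.mem_append.1 hmem with hmem | hmem
        · exfalso
          obtain ⟨c, hc, hpair⟩ := List.mem_map.1 hmem
          have hx : e₁.x = x := (congrArg Prod.fst hpair).symm
          exact hndx (hx ▸ key_mem b he₁)
        · exact hmem
  · -- empty list
    intro T ℓ hnd e₁ he₁
    rw [placeL_nil] at he₁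
    simp at he₁
  · -- cons list
    intro c cs ih1 ih2 T ℓ hnd e₁ he₁ e₂ he₂
    rw [nodesL] at hnd
    rw [List.nodup_append] at hnd
    obtain ⟨hnd1, hnd2, hdisj⟩ := hnd
    replace hdisj : ∀ {y}, y ∈ nodesT c → y ∈ nodesL cs → False := fun h1 h2 => hdisj _ h1 _ h2 rfl
    rw [placeL_cons] at he₁ he₂
    rw [cpL]
    have hkey1 : ∀ e ∈ place b c T ℓ, e.x ∈ nodesT c := by
      intro e he
      rw [← (keys_place b).1 c T ℓ]
      exact List.mem_map_of_mem he
    rcases List.mem_append.1 he₁ with he₁ | he₁ <;> rcases List.mem_append.1 he₂ with he₂ | he₂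
    · -- both in tree c
      rw [ih1 T ℓ hnd1 e₁ he₁ e₂ he₂]
      constructor
      · exact fun h => List.mem_append_left _ h
      · intro hmem
        rcases List.mem_append.1 hmem with hmem | hmem
        · exact hmem
        · exfalso
          exact hdisj (hkey1 e₁ he₁) (cp_mem.2 cs _ hmem).1
    · -- e₁ in tree c, e₂ in rest
      constructor
      · rintro ⟨-, -, h3⟩
        exfalso
        have hb1 := (place_bounds b).1 c T ℓ e₁ he₁
        have hb2 := (place_bounds b).2 cs _ ℓ e₂ he₂
        omega
      · intro hmem
        exfalso
        rcases List.mem_append.1 hmem with hmem | hmem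
        · exact hdisj (cp_mem.1 c _ hmem).2 (key_mem b he₂)
        · exact hdisj (hkey1 e₁ he₁) (cp_mem.2 cs _ hmem).1
    · -- e₁ in rest, e₂ in tree c
      constructor
      · rintro ⟨-, h2, -⟩
        exfalso
        have hb1 := (place_bounds b).2 cs _ ℓ e₁ he₁
        have hb2 := (place_bounds b).1 c T ℓ e₂ he₂
        omega
      · intro hmem
        exfalso
        rcases List.mem_append.1 hmem with hmem | hmem
        · exact hdisj (cp_mem.1 c _ hmem).1 (key_mem b he₁)
        · exact hdisj (hkey1 e₂ he₂) (cp_mem.2 cs _ hmem).2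
    · -- both in rest
      rw [ih2 _ ℓ hnd2 e₁ he₁ e₂ he₂]
      constructor
      · exact fun h => List.mem_append_right _ h
      · intro hmem
        rcases List.mem_append.1 hmem with hmem | hmem
        · exfalso
          exact hdisj (cp_mem.1 c _ hmem).1 (key_mem b he₁)
        · exact hmem

lemma place_pairwise :
    (∀ t : RTX X, ∀ T ℓ, (place b t T ℓ).Pairwise (fun e₁ e₂ => e₁.a < e₂.a)) ∧
    (∀ cs : List (RTX X), ∀ T ℓ, (placeL b cs T ℓ).Pairwise (fun e₁ e₂ => e₁.a < e₂.a)) := by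
  apply tree_list_ind
  · intro x cs ih T ℓ
    rw [place_eq]
    apply List.Pairwise.cons
    · intro e he
      have h1 := (place_bounds b).2 cs _ _ e he
      have h2 := seek_gt T (jv b (RTX.node x cs))
      show seek T (jv b (RTX.node x cs)) < e.a
      omega
    · exact ih _ _
  · intro T ℓ
    rw [placeL_nil]
    exact List.Pairwise.nil
  · intro c cs ih1 ih2 T ℓ
    rw [placeL_cons]
    rw [List.pairwise_append]
    refine ⟨ih1 _ _, ih2 _ _, ?_⟩
    intro e₁ he₁ e₂ he₂
    have h1 := (place_bounds b).1 c T ℓ e₁ he₁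
    have h2 := (place_bounds b).2 cs _ ℓ e₂ he₂
    omega

/-- generic membership in nodesL -/
lemma mem_nodesL_iff {cs : List (RTX X)} {y : X} :
    y ∈ nodesL cs ↔ ∃ c ∈ cs, y ∈ nodesT c := by
  induction cs with
  | nil => rw [nodesL]; simp
  | cons c cs ih =>
    rw [nodesL, List.mem_append, ih]
    simp

lemma mem_cpL_iff {cs : List (RTX X)} {p : X × X} :
    p ∈ cpL cs ↔ ∃ c ∈ cs, p ∈ cpT c := by
  induction cs with
  | nil => rw [cpL]; simp
  | cons c cs ih =>
    rw [cpL, List.mem_append, ih]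
    simp

lemma htL_le {cs : List (RTX X)} {k : ℕ} (h : ∀ c ∈ cs, htT c ≤ k) : htL cs ≤ k := by
  induction cs with
  | nil => rw [htL]; omega
  | cons c cs ih =>
    rw [htL]
    have h1 := h c (List.mem_cons_self)
    have h2 := ih (fun c' hc' => h c' (List.mem_cons_of_mem _ hc'))
    omega

lemma nodesL_nodup {cs : List (RTX X)} (h1 : ∀ c ∈ cs, (nodesT c).Nodup)
    (h2 : cs.Pairwise (fun c₁ c₂ => ∀ y, y ∈ nodesT c₁ → y ∈ nodesT c₂ → False)) :
    (nodesL cs).Nodup := by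
  induction cs with
  | nil => rw [nodesL]; exact List.nodup_nil
  | cons c cs ih =>
    rw [nodesL, List.nodup_append]
    obtain ⟨hp, hrest⟩ := List.pairwise_cons.1 h2
    refine ⟨h1 c (List.mem_cons_self), ih (fun c' hc' => h1 c' (List.mem_cons_of_mem _ hc')) hrest, ?_⟩
    intro y hy y' hy' hyy; subst hyy
    obtain ⟨c', hc', hyc'⟩ := mem_nodesL_iff.1 hy'
    exact hp c' hc' y hy hyc'

lemma cnt_length :
    (∀ t : RTX X, cnt t = (nodesT t).length) ∧
    (∀ cs : List (RTX X), cntL cs = (nodesL cs).length) := by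
  apply tree_list_ind
  · intro x cs ih
    rw [cnt, nodesT, List.length_cons, ih]
    omega
  · rw [cntL, nodesL]
    rfl
  · intro c cs ih1 ih2
    rw [cntL, nodesL, List.length_append, ih1, ih2]

end PlaceLemmas

section SizeBound
variable (b : ℕ)

def eps (b : ℕ) : ℚ := 2 / 2 ^ (b + 4)

lemma eps_pos : 0 < eps b := by unfold eps; positivity

lemma one_le_base : (1:ℚ) ≤ 1 + eps b := by have := eps_pos b; linarith

lemma one_le_pow_eps (k : ℕ) : (1:ℚ) ≤ (1 + eps b) ^ k :=
  one_le_pow₀ (one_le_base b)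

lemma zOf_le (N : ℕ) : zOf b N ≤ N + 2 ^ jOf b N := by
  unfold zOf fOf
  rw [add_mul, one_mul]
  have := Nat.div_mul_le_self N (2 ^ jOf b N)
  omega

lemma cast_pow_jOf (N : ℕ) : ((2:ℚ)) ^ (jOf b N) ≤ 1 + N * eps b / 2 := by
  rcases eq_or_ne (jOf b N) 0 with h | h
  · rw [h, pow_zero]
    have : (0:ℚ) ≤ N * eps b / 2 := by have := eps_pos b; positivity
    linarith
  · have hle := pow_jOf_le b h
    have hcast : ((2:ℚ)) ^ (jOf b N) * 2 ^ (b + 4) ≤ (N : ℚ) := by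
      exact_mod_cast hle
    have hpos : (0:ℚ) < 2 ^ (b + 4) := by positivity
    have heq : (N:ℚ) * eps b / 2 = (N:ℚ) / 2 ^ (b + 4) := by
      unfold eps; field_simp
    have h5 : ((2:ℚ)) ^ (jOf b N) ≤ (N:ℚ) / 2 ^ (b + 4) := by
      rw [le_div_iff₀ hpos]; linarith
    rw [heq]
    linarith

lemma zv_le_q (t : RTX X) : (zv b t : ℚ) ≤ (Nv b t) * (1 + eps b) + 1 := by
  have h1 : (zv b t : ℚ) ≤ (Nv b t : ℚ) + 2 ^ jOf b (Nv b t) := by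
    have := zOf_le b (Nv b t)
    have hc : ((zOf b (Nv b t) : ℕ) : ℚ) ≤ ((Nv b t + 2 ^ jOf b (Nv b t) : ℕ) : ℚ) := by
      exact_mod_cast this
    push_cast at hc
    exact hc
  have h2 := cast_pow_jOf b (Nv b t)
  have h3 : (0:ℚ) ≤ (Nv b t : ℚ) := by positivity
  have h4 : (0:ℚ) ≤ eps b := le_of_lt (eps_pos b)
  calc (zv b t : ℚ) ≤ (Nv b t : ℚ) + 2 ^ jOf b (Nv b t) := h1
    _ ≤ (Nv b t : ℚ) + (1 + Nv b t * eps b / 2) := by linarith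
    _ ≤ (Nv b t) * (1 + eps b) + 1 := by nlinarith

lemma allow_le_q (t : RTX X) : (allow b t : ℚ) ≤ (zv b t) * (1 + eps b) + 2 := by
  have h1 : allow b t = zv b t + 2 ^ (jv b t + 1) := rfl
  have h2 := cast_pow_jOf b (Nv b t)
  have h3 : (Nv b t : ℚ) ≤ (zv b t : ℚ) := by exact_mod_cast Nv_le_zv b t
  have h4 : (0:ℚ) ≤ eps b := le_of_lt (eps_pos b)
  have h5 : ((2:ℚ)) ^ (jv b t + 1) = 2 * 2 ^ (jv b t) := by ring
  have h6 : (allow b t : ℚ) = (zv b t : ℚ) + 2 ^ (jv b t + 1) := by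
    rw [h1]; push_cast; ring
  have h7 : (0:ℚ) ≤ (Nv b t : ℚ) := by positivity
  rw [h6, h5]
  unfold jv
  nlinarith

lemma size_bound :
    (∀ t : RTX X, (zv b t : ℚ) ≤ 4 * cnt t * (1 + eps b) ^ (2 * htT t) - 2) ∧
    (∀ cs : List (RTX X), (NvL b cs : ℚ) ≤ 4 * cntL cs * (1 + eps b) ^ (2 * htL cs + 1)) := by
  have hb := one_le_base b
  have he := eps_pos b
  apply tree_list_ind
  · intro x cs ih
    have h1 := zv_le_q b (RTX.node x cs)
    have h2 : Nv b (RTX.node x cs) = 1 + NvL b cs := Nv_node b x cs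
    have h3 : htT (RTX.node x cs) = htL cs + 1 := by rw [htT]
    have h4 : cnt (RTX.node x cs) = 1 + cntL cs := by rw [cnt]
    have hQ1 : (1:ℚ) ≤ (1 + eps b) ^ (2 * htL cs + 1) := one_le_pow_eps b _
    have hQ2 : (1 + eps b) ^ (2 * htL cs + 1) * (1 + eps b) = (1 + eps b) ^ (2 * (htL cs + 1)) := by
      rw [show 2 * (htL cs + 1) = 2 * htL cs + 1 + 1 by omega, pow_succ, pow_succ, pow_succ]
    have hsq : (1 + eps b) ^ 2 ≤ (1 + eps b) ^ (2 * (htL cs + 1)) := by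
      apply pow_le_pow_right₀ hb; omega
    rw [h3, h4]
    have hNvq : (Nv b (RTX.node x cs) : ℚ) = 1 + NvL b cs := by rw [h2]; push_cast; ring
    have hcnt : (0:ℚ) ≤ (cntL cs : ℚ) := by positivity
    calc (zv b (RTX.node x cs) : ℚ) ≤ (Nv b (RTX.node x cs)) * (1 + eps b) + 1 := h1
      _ = (1 + (NvL b cs : ℚ)) * (1 + eps b) + 1 := by rw [hNvq]
      _ ≤ (1 + 4 * cntL cs * (1 + eps b) ^ (2 * htL cs + 1)) * (1 + eps b) + 1 := by nlinarith [ih]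
      _ = 4 * cntL cs * ((1 + eps b) ^ (2 * htL cs + 1) * (1 + eps b)) + (1 + eps b) + 1 := by ring
      _ = 4 * cntL cs * (1 + eps b) ^ (2 * (htL cs + 1)) + (2 + eps b) := by rw [hQ2]; ring
      _ ≤ 4 * (1 + cntL cs) * (1 + eps b) ^ (2 * (htL cs + 1)) - 2 := by nlinarith [hsq]
      _ = 4 * ((1:ℚ) + cntL cs) * (1 + eps b) ^ (2 * (htL cs + 1)) - 2 := by ring
      _ = 4 * (((1 + cntL cs : ℕ) : ℚ)) * (1 + eps b) ^ (2 * (htL cs + 1)) - 2 := by push_cast; ring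
  · rw [NvL, cntL]
    push_cast
    simp
  · intro c cs ih1 ih2
    have h1 := allow_le_q b c
    have h2 : NvL b (c :: cs) = allow b c + NvL b cs := NvL_cons b c cs
    have h3 : htL (c :: cs) = max (htT c) (htL cs) := by rw [htL]
    have h4 : cntL (c :: cs) = cnt c + cntL cs := by rw [cntL]
    have hP1 : (1 + eps b) ^ (2 * htT c) * (1 + eps b) = (1 + eps b) ^ (2 * htT c + 1) := by
      rw [← pow_succ]
    have hm1 : (1 + eps b) ^ (2 * htT c + 1) ≤ (1 + eps b) ^ (2 * htL (c :: cs) + 1) := by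
      apply pow_le_pow_right₀ hb
      rw [h3]
      have := le_max_left (htT c) (htL cs)
      omega
    have hm2 : (1 + eps b) ^ (2 * htL cs + 1) ≤ (1 + eps b) ^ (2 * htL (c :: cs) + 1) := by
      apply pow_le_pow_right₀ hb
      rw [h3]
      have := le_max_right (htT c) (htL cs)
      omega
    have hcntc : (1:ℚ) ≤ (cnt c : ℚ) := by
      have : 0 < cnt c := by rcases c with ⟨y, cs₂⟩; rw [cnt]; omega
      exact_mod_cast this
    have hcnt : (0:ℚ) ≤ (cntL cs : ℚ) := by positivity
    have hall : (allow b c : ℚ) ≤ 4 * cnt c * (1 + eps b) ^ (2 * htT c + 1) := by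
      calc (allow b c : ℚ) ≤ (zv b c) * (1 + eps b) + 2 := h1
        _ ≤ (4 * cnt c * (1 + eps b) ^ (2 * htT c) - 2) * (1 + eps b) + 2 := by nlinarith [ih1]
        _ = 4 * cnt c * ((1 + eps b) ^ (2 * htT c) * (1 + eps b)) - 2 * eps b := by ring
        _ ≤ 4 * cnt c * (1 + eps b) ^ (2 * htT c + 1) := by rw [hP1]; nlinarith
    have hq2 : (NvL b (c :: cs) : ℚ) = (allow b c : ℚ) + NvL b cs := by rw [h2]; push_cast; ring
    have hQ0 : (0:ℚ) ≤ (1 + eps b) ^ (2 * htT c + 1) := by positivity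
    have hQ0' : (0:ℚ) ≤ (1 + eps b) ^ (2 * htL cs + 1) := by positivity
    calc (NvL b (c :: cs) : ℚ) = (allow b c : ℚ) + NvL b cs := hq2
      _ ≤ 4 * cnt c * (1 + eps b) ^ (2 * htT c + 1) + 4 * cntL cs * (1 + eps b) ^ (2 * htL cs + 1) := by
          nlinarith [ih2]
      _ ≤ 4 * cnt c * (1 + eps b) ^ (2 * htL (c::cs) + 1) + 4 * cntL cs * (1 + eps b) ^ (2 * htL (c::cs) + 1) := by
          nlinarith [hm1, hm2]
      _ = 4 * ((cnt c : ℚ) + cntL cs) * (1 + eps b) ^ (2 * htL (c::cs) + 1) := by ring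
      _ = 4 * (cntL (c :: cs) : ℚ) * (1 + eps b) ^ (2 * htL (c::cs) + 1) := by
          rw [h4]; push_cast; ring

lemma pow_one_add_le {ε : ℚ} (hε : 0 ≤ ε) :
    ∀ k : ℕ, (k : ℚ) * ε ≤ 1 / 2 → (1 + ε) ^ k ≤ 1 + 2 * k * ε := by
  intro k
  induction k with
  | zero => intro h; simp
  | succ k ih =>
    intro h
    have hk : (k : ℚ) * ε ≤ 1 / 2 := by
      have : (k : ℚ) ≤ (k + 1 : ℕ) := by push_cast; linarith
      nlinarith
    have h1 := ih hk
    have h2 : (1 + ε) ^ (k + 1) = (1 + ε) ^ k * (1 + ε) := by rw [pow_succ]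
    have h3 : (0:ℚ) ≤ (k:ℚ) := by positivity
    rw [h2]
    have : (1 + ε) ^ k * (1 + ε) ≤ (1 + 2 * k * ε) * (1 + ε) := by nlinarith [pow_nonneg (by linarith : (0:ℚ) ≤ 1 + ε) k]
    calc (1 + ε) ^ k * (1 + ε) ≤ (1 + 2 * k * ε) * (1 + ε) := this
      _ = 1 + 2 * k * ε + ε + 2 * k * ε * ε := by ring
      _ ≤ 1 + 2 * (k + 1 : ℕ) * ε := by push_cast; nlinarith
  
end SizeBound

section WFDef
variable [PartialOrder X]

mutual
def WFT : RTX X → Prop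
  | .node x cs => (∀ u : X, u ⋖ x ↔ u ∈ cs.map rootX) ∧ WFL cs
def WFL : List (RTX X) → Prop
  | [] => True
  | c :: cs => WFT c ∧ WFL cs
end

end WFDef

end RTX

/-! ### Building the forest from the order -/

section Build
variable {X : Type} [Fintype X] [PartialOrder X]

open Classical in
noncomputable def childList (v : X) : List X :=
  (Finset.univ.filter (· ⋖ v)).toList

lemma mem_childList {u v : X} : u ∈ childList v ↔ u ⋖ v := by
  classical
  simp [childList]

lemma childList_nodup (v : X) : (childList v).Nodup := Finset.nodup_toList _

lemma downset_card_lt {u v : X} (h : u ⋖ v) : (downset u).card < (downset v).card := by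
  apply Finset.card_lt_card
  constructor
  · intro y hy
    rw [mem_downset] at *
    exact le_trans hy (le_of_lt h.1)
  · intro hsub
    have := hsub (mem_downset.2 (le_refl v))
    rw [mem_downset] at this
    exact absurd (lt_of_le_of_lt this h.1) (lt_irrefl v)

noncomputable def toT (v : X) : RTX X :=
  .node v ((childList v).attach.map (fun c => toT c.1))
termination_by (downset v).card
decreasing_by exact downset_card_lt (mem_childList.1 c.2)

lemma rootX_toT (v : X) : (toT v).rootX = v := by
  rw [toT]; rfl

/-- strong induction along the cover relation -/
lemma cov_induction (P : X → Prop) (h : ∀ v, (∀ u, u ⋖ v → P u) → P v) : ∀ v, P v := by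
  have key : ∀ n (v : X), (downset v).card ≤ n → P v := by
    intro n
    induction n with
    | zero =>
      intro v hv
      have : 0 < (downset v).card := Finset.card_pos.2 ⟨v, mem_downset.2 (le_refl v)⟩
      omega
    | succ n ih =>
      intro v hv
      apply h
      intro u hu
      have := downset_card_lt hu
      exact ih u (by omega)
  exact fun v => key _ v le_rfl

lemma WFL_iff {cs : List (RTX X)} : RTX.WFL cs ↔ ∀ c ∈ cs, RTX.WFT c := by
  induction cs with
  | nil => simp [RTX.WFL]
  | cons c cs ih => rw [RTX.WFL]; simp [ih]

lemma WFT_toT (hT : IsTreeOrder X) (v : X) : RTX.WFT (toT v) := by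
  induction v using cov_induction with
  | h v ih =>
    rw [toT]
    rw [RTX.WFT]
    constructor
    · intro u
      rw [List.map_map]
      have : (RTX.rootX ∘ fun c : {x // x ∈ childList v} => toT c.1) = fun c => c.1 := by
        funext c; exact rootX_toT c.1
      rw [this, List.attach_map_subtype_val (childList v)]
      exact Iff.symm mem_childList
    · rw [WFL_iff]
      intro c hc
      simp only [List.mem_map] at hc
      obtain ⟨u, hu, rfl⟩ := hc
      exact ih u.1 (mem_childList.1 u.2)

lemma nodesT_toT (hT : IsTreeOrder X) (v : X) : ∀ y, y ∈ RTX.nodesT (toT v) ↔ y ≤ v := by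
  induction v using cov_induction with
  | h v ih =>
    intro y
    rw [toT, RTX.nodesT]
    rw [List.mem_cons, RTX.mem_nodesL_iff]
    constructor
    · rintro (rfl | ⟨c, hc, hyc⟩)
      · exact le_refl _
      · simp only [List.mem_map, List.mem_attach, true_and] at hc
        obtain ⟨u, rfl⟩ := hc
        have hu : u.1 ⋖ v := mem_childList.1 u.2
        have := (ih u.1 hu y).1 hyc
        exact le_trans this (le_of_lt hu.1)
    · intro hy
      rcases eq_or_lt_of_le hy with rfl | hy
      · left; rfl
      · right
        obtain ⟨c, hc, hyc⟩ := exists_covby_above hT hy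
        refine ⟨toT c, ?_, (ih c hc y).2 hyc⟩
        simp only [List.mem_map, List.mem_attach, true_and]
        exact ⟨⟨c, mem_childList.2 hc⟩, rfl⟩

lemma nodesT_toT_nodup (hT : IsTreeOrder X) (v : X) : (RTX.nodesT (toT v)).Nodup := by
  induction v using cov_induction with
  | h v ih =>
    rw [toT, RTX.nodesT]
    rw [List.nodup_cons]
    constructor
    · intro hv
      obtain ⟨c, hc, hvc⟩ := RTX.mem_nodesL_iff.1 hv
      simp only [List.mem_map, List.mem_attach, true_and] at hc
      obtain ⟨u, rfl⟩ := hc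
      have hu : u.1 ⋖ v := mem_childList.1 u.2
      have := (nodesT_toT hT u.1 v).1 hvc
      exact absurd (lt_of_le_of_lt this hu.1) (lt_irrefl v)
    · apply RTX.nodesL_nodup
      · intro c hc
        simp only [List.mem_map, List.mem_attach, true_and] at hc
        obtain ⟨u, rfl⟩ := hc
        exact ih u.1 (mem_childList.1 u.2)
      · rw [List.pairwise_map]
        have hnd : (childList v).attach.Pairwise (fun u₁ u₂ => u₁.1 ≠ u₂.1) := by
          have h0 : (childList v).Nodup := childList_nodup v
          rw [← List.attach_map_subtype_val (childList v), List.Nodup] at h0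
          rw [List.pairwise_map] at h0
          exact h0
        apply List.Pairwise.imp ?_ hnd
        intro u₁ u₂ hne y hy₁ hy₂
        have h₁ : u₁.1 ⋖ v := mem_childList.1 u₁.2
        have h₂ : u₂.1 ⋖ v := mem_childList.1 u₂.2
        have hy₁' := (nodesT_toT hT u₁.1 y).1 hy₁
        have hy₂' := (nodesT_toT hT u₂.1 y).1 hy₂
        exact downset_covby_disjoint hT h₁ h₂ hne hy₁' hy₂'

lemma cpT_toT (hT : IsTreeOrder X) (v : X) :
    ∀ p : X × X, p ∈ RTX.cpT (toT v) ↔ (p.2 ⋖ p.1 ∧ p.1 ≤ v) := by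
  induction v using cov_induction with
  | h v ih =>
    intro p
    rw [toT, RTX.cpT]
    rw [List.mem_append, RTX.mem_cpL_iff]
    constructor
    · rintro (hp | ⟨c, hc, hpc⟩)
      · obtain ⟨c, hc, rfl⟩ := List.mem_map.1 hp
        simp only [List.mem_map, List.mem_attach, true_and] at hc
        obtain ⟨u, rfl⟩ := hc
        have hu : u.1 ⋖ v := mem_childList.1 u.2
        rw [rootX_toT]
        exact ⟨hu, le_refl _⟩
      · simp only [List.mem_map, List.mem_attach, true_and] at hc
        obtain ⟨u, rfl⟩ := hc
        have hu : u.1 ⋖ v := mem_childList.1 u.2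
        obtain ⟨h1, h2⟩ := (ih u.1 hu p).1 hpc
        exact ⟨h1, le_trans h2 (le_of_lt hu.1)⟩
    · rintro ⟨hcov, hle⟩
      rcases eq_or_lt_of_le hle with heq | hlt
      · left
        apply List.mem_map.2
        refine ⟨toT p.2, ?_, ?_⟩
        · simp only [List.mem_map, List.mem_attach, true_and]
          exact ⟨⟨p.2, mem_childList.2 (heq ▸ hcov)⟩, rfl⟩
        · rw [rootX_toT, ← heq]
      · right
        obtain ⟨c, hc, hpc⟩ := exists_covby_above hT hlt
        refine ⟨toT c, ?_, (ih c hc p).2 ⟨hcov, hpc⟩⟩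
        simp only [List.mem_map, List.mem_attach, true_and]
        exact ⟨⟨c, mem_childList.2 hc⟩, rfl⟩

lemma htT_toT {d : ℕ} (hT : IsTreeOrder X) (hH : HeightLE X d) (v : X) :
    RTX.htT (toT v) + lvl v ≤ d + 1 := by
  induction v using cov_induction with
  | h v ih =>
    rw [toT, RTX.htT]
    have hlv : lvl v ≤ d := lvl_le_of_height hH hT v
    have hl : RTX.htL ((childList v).attach.map (fun c => toT c.1)) ≤ d - lvl v := by
      apply RTX.htL_le
      intro c hc
      simp only [List.mem_map, List.mem_attach, true_and] at hc
      obtain ⟨u, rfl⟩ := hc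
      have hu : u.1 ⋖ v := mem_childList.1 u.2
      have h1 := ih u.1 hu
      have h2 := lvl_covby hT hu
      omega
    omega

end Build

/-! ### The decoder -/

def DecP (y₁ y₂ : ℕ) : Prop :=
  ∃ b f₁ l₁ a₁ f₂ l₂ a₂ : ℕ, f₁ < 2 ^ (b + 6) ∧ l₁ < 2 ^ b ∧ f₂ < 2 ^ (b + 6) ∧ l₂ < 2 ^ b ∧
    y₁ = enc b f₁ l₁ a₁ ∧ y₂ = enc b f₂ l₂ a₂ ∧
    l₂ = l₁ + 1 ∧ a₁ < a₂ ∧ a₂ < a₁ + f₁ * 2 ^ pv a₁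

noncomputable def Dec : ℕ → ℕ → Bool :=
  fun y₁ y₂ => @decide (DecP y₁ y₂) (Classical.propDecidable _)

lemma Dec_iff {y₁ y₂ : ℕ} : Dec y₁ y₂ = true ↔ DecP y₁ y₂ := by
  unfold Dec
  exact @decide_eq_true_iff _ (Classical.propDecidable _)

end PSU

theorem parenthood_scheme_universal' :
    ∃ (C : ℕ) (D : ℕ → ℕ → Bool),
      ∀ (X : Type) [Fintype X] [PartialOrder X], ∀ d : ℕ,
        IsTreeOrder X → 2 ≤ Fintype.card X → 2 ≤ d → HeightLE X d →
        ∃ L : X → ℕ,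
          Function.Injective L ∧
          (∀ x : X, L x ≤ C * Fintype.card X * d ^ 3 * (Nat.log 2 d) ^ 2) ∧
          (∀ u v : X, u ⋖ v ↔ D (L v) (L u) = true) := by
  classical
  refine ⟨8192, PSU.Dec, ?_⟩
  intro X _ _ d hT hn hd hH
  set n := Fintype.card X with hndef
  set b := Nat.log 2 d + 1 with hbdef
  -- basic numeric facts about b and d
  have hd1 : 1 ≤ d := by omega
  have h2b_gt : d < 2 ^ b := Nat.lt_pow_succ_log_self (by norm_num) d
  have h2b_le : 2 ^ b ≤ 2 * d := by
    rw [hbdef, pow_succ]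
    have := Nat.pow_log_le_self 2 (show d ≠ 0 by omega)
    omega
  -- the forest
  set rootList := (Finset.univ.filter (fun v : X => IsMax v)).toList with hrootList
  set forest := rootList.map PSU.toT with hforest
  set E := PSU.RTX.placeL b forest 0 1 with hE
  have hroot_mem : ∀ r : X, r ∈ rootList ↔ IsMax r := by
    intro r
    rw [hrootList, Finset.mem_toList, Finset.mem_filter]
    simp
  -- completeness of keys
  have hmem_nodes : ∀ y : X, y ∈ PSU.RTX.nodesL forest := by
    intro y
    rw [PSU.RTX.mem_nodesL_iff]
    obtain ⟨r, hr, hyr⟩ := PSU.exists_root hT y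
    exact ⟨PSU.toT r, List.mem_map_of_mem ((hroot_mem r).2 hr),
      (PSU.nodesT_toT hT r y).2 hyr⟩
  -- nodup of keys
  have hnodup : (PSU.RTX.nodesL forest).Nodup := by
    apply PSU.RTX.nodesL_nodup
    · intro c hc
      rw [hforest] at hc
      obtain ⟨r, hr, rfl⟩ := List.mem_map.1 hc
      exact PSU.nodesT_toT_nodup hT r
    · rw [hforest, List.pairwise_map]
      have hnd : rootList.Pairwise (· ≠ ·) := Finset.nodup_toList _
      apply List.Pairwise.imp_of_mem ?_ hnd
      intro r₁ r₂ hr₁ hr₂ hne y hy₁ hy₂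
      have m₁ : IsMax r₁ := (hroot_mem r₁).1 hr₁
      have m₂ : IsMax r₂ := (hroot_mem r₂).1 hr₂
      have hy₁' := (PSU.nodesT_toT hT r₁ y).1 hy₁
      have hy₂' := (PSU.nodesT_toT hT r₂ y).1 hy₂
      exact hne (PSU.root_unique hT m₁ m₂ hy₁' hy₂')
  -- height bound
  have hht : PSU.RTX.htL forest ≤ d := by
    apply PSU.RTX.htL_le
    intro c hc
    rw [hforest] at hc
    obtain ⟨r, hr, rfl⟩ := List.mem_map.1 hc
    have h1 := PSU.htT_toT hT hH r
    have h2 := PSU.lvl_pos r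
    omega
  -- counting
  have hcnt : PSU.RTX.cntL forest = n := by
    rw [PSU.RTX.cnt_length.2]
    have h1 : (PSU.RTX.nodesL forest).toFinset = Finset.univ := by
      ext y
      simp [hmem_nodes y]
    have h2 := List.toFinset_card_of_nodup hnodup
    calc (PSU.RTX.nodesL forest).length = (PSU.RTX.nodesL forest).toFinset.card := h2.symm
      _ = (Finset.univ : Finset X).card := by rw [h1]
      _ = n := by rw [hndef, Finset.card_univ]
  -- size bound on positions: NvL ≤ 8n
  have hNvL : PSU.RTX.NvL b forest ≤ 8 * n := by
    have hq := (PSU.RTX.size_bound (X := X) b).2 forest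
    have hεle : PSU.RTX.eps b ≤ 1 / (8 * ((d:ℚ) + 1)) := by
      unfold PSU.RTX.eps
      rw [div_le_div_iff₀ (by positivity) (by positivity)]
      have h16 : (16:ℚ) * (d + 1) ≤ 2 ^ (b + 4) := by
        have hnat : 16 * (d + 1) ≤ 2 ^ (b + 4) := by
          have h1 : d + 1 ≤ 2 ^ b := h2b_gt
          calc 16 * (d + 1) ≤ 16 * 2 ^ b := by omega
            _ = 2 ^ (b + 4) := by ring
        exact_mod_cast hnat
      linarith
    have hε0 := PSU.RTX.eps_pos b
    have hP : (1 + PSU.RTX.eps b) ^ (2 * PSU.RTX.htL forest + 1) ≤ 2 := by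
      have hk : ((2 * PSU.RTX.htL forest + 1 : ℕ) : ℚ) * PSU.RTX.eps b ≤ 1 / 2 := by
        have hkd : ((2 * PSU.RTX.htL forest + 1 : ℕ) : ℚ) ≤ 2 * d + 1 := by
          have : 2 * PSU.RTX.htL forest + 1 ≤ 2 * d + 1 := by omega
          exact_mod_cast this
        have hd0 : (0:ℚ) < (d:ℚ) + 1 := by positivity
        calc ((2 * PSU.RTX.htL forest + 1 : ℕ) : ℚ) * PSU.RTX.eps b
            ≤ (2 * (d:ℚ) + 1) * (1 / (8 * ((d:ℚ) + 1))) := by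
              apply mul_le_mul hkd hεle (le_of_lt hε0) (by positivity)
          _ ≤ 1 / 2 := by
              rw [mul_one_div, div_le_div_iff₀ (by positivity) (by norm_num)]
              nlinarith
      have hthis := PSU.RTX.pow_one_add_le (le_of_lt hε0) (2 * PSU.RTX.htL forest + 1) hk
      calc (1 + PSU.RTX.eps b) ^ (2 * PSU.RTX.htL forest + 1)
          ≤ 1 + 2 * (2 * PSU.RTX.htL forest + 1 : ℕ) * PSU.RTX.eps b := hthis
        _ ≤ 2 := by nlinarith
    have hq2 : (PSU.RTX.NvL b forest : ℚ) ≤ 8 * n := by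
      have hc0 : (0:ℚ) ≤ (PSU.RTX.cntL forest : ℚ) := by positivity
      have hpow0 : (0:ℚ) ≤ (1 + PSU.RTX.eps b) ^ (2 * PSU.RTX.htL forest + 1) := by positivity
      calc (PSU.RTX.NvL b forest : ℚ)
          ≤ 4 * PSU.RTX.cntL forest * (1 + PSU.RTX.eps b) ^ (2 * PSU.RTX.htL forest + 1) := hq
        _ ≤ 4 * PSU.RTX.cntL forest * 2 := by nlinarith
        _ = 8 * (PSU.RTX.cntL forest : ℚ) := by ring
        _ = 8 * n := by rw [hcnt]
    exact_mod_cast hq2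
  -- entry invariants
  have hbou := (PSU.RTX.place_bounds (X := X) b).2 forest 0 1
  have hent := (PSU.RTX.place_ent (X := X) b).2 forest 0 1
  have hendE : PSU.RTX.endL b forest 0 ≤ 8 * n := by
    have := PSU.RTX.endL_le b forest 0
    omega
  -- keys of E
  have hkeysE : E.map PSU.RTX.Ent.x = PSU.RTX.nodesL forest := (PSU.RTX.keys_place b).2 forest 0 1
  -- the entry of each element
  have hex : ∀ x : X, ∃ e, e ∈ E ∧ PSU.RTX.Ent.x e = x := by
    intro x
    have hx : x ∈ E.map PSU.RTX.Ent.x := by rw [hkeysE]; exact hmem_nodes x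
    obtain ⟨e, he, hex⟩ := List.mem_map.1 hx
    exact ⟨e, he, hex⟩
  set ent : X → PSU.RTX.Ent X := fun x => Classical.choose (hex x) with hent_def
  have hentE : ∀ x : X, ent x ∈ E ∧ (ent x).x = x := fun x => Classical.choose_spec (hex x)
  set lab : PSU.RTX.Ent X → ℕ := fun e => PSU.enc b e.f (e.lv - 1) e.a with hlab
  -- widths of the fields of any entry
  have hwid : ∀ e ∈ E, e.f < 2 ^ (b + 6) ∧ e.lv - 1 < 2 ^ b ∧ 1 ≤ e.lv ∧ e.lv ≤ d := by
    intro e he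
    obtain ⟨h1, h2, h3, h4, h5, h6⟩ := hent e he
    have hlv : e.lv ≤ d := by omega
    exact ⟨h3, by omega, h4, hlv⟩
  -- Cond ↔ DecP for entries of E
  have hCond : ∀ e₁ ∈ E, ∀ e₂ ∈ E, (PSU.DecP (lab e₁) (lab e₂) ↔ PSU.RTX.Cond e₁ e₂) := by
    intro e₁ he₁ e₂ he₂
    obtain ⟨hf₁, hl₁, hlv₁, -⟩ := hwid e₁ he₁
    obtain ⟨hf₂, hl₂, hlv₂, -⟩ := hwid e₂ he₂
    constructor
    · rintro ⟨b', f₁, l₁, a₁, f₂, l₂, a₂, hwf₁, hwl₁, hwf₂, hwl₂, heq₁, heq₂, hll, haa, hab⟩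
      obtain ⟨hb1, hff1, hll1, haa1⟩ := PSU.enc_inj hf₁ hl₁ hwf₁ hwl₁ heq₁
      obtain ⟨hb2, hff2, hll2, haa2⟩ := PSU.enc_inj hf₂ hl₂ hwf₂ hwl₂ heq₂
      subst hb1 hff1 hll1 haa1 hff2 hll2 haa2
      have hz := (hent e₁ he₁).1
      refine ⟨by omega, haa, ?_⟩
      rw [← hz]
      exact hab
    · rintro ⟨h1, h2, h3⟩
      have hz := (hent e₁ he₁).1
      refine ⟨b, e₁.f, e₁.lv - 1, e₁.a, e₂.f, e₂.lv - 1, e₂.a,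
        hf₁, hl₁, hf₂, hl₂, rfl, rfl, by omega, h2, ?_⟩
      rw [hz]
      exact h3
  -- Cond ↔ cover
  have hCov : ∀ e₁ ∈ E, ∀ e₂ ∈ E, (PSU.RTX.Cond e₁ e₂ ↔ e₂.x ⋖ e₁.x) := by
    intro e₁ he₁ e₂ he₂
    rw [(PSU.RTX.place_iff b).2 forest 0 1 hnodup e₁ he₁ e₂ he₂]
    rw [PSU.RTX.mem_cpL_iff]
    constructor
    · rintro ⟨c, hc, hpc⟩
      rw [hforest] at hc
      obtain ⟨r, hr, rfl⟩ := List.mem_map.1 hc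
      exact ((PSU.cpT_toT hT r _).1 hpc).1
    · intro hcov
      obtain ⟨r, hr, hvr⟩ := PSU.exists_root hT e₁.x
      refine ⟨PSU.toT r, ?_, (PSU.cpT_toT hT r (e₁.x, e₂.x)).2 ⟨hcov, hvr⟩⟩
      rw [hforest]
      exact List.mem_map_of_mem ((hroot_mem r).2 hr)
  -- entries with equal positions are equal
  have hpos_inj : ∀ e₁ ∈ E, ∀ e₂ ∈ E, e₁.a = e₂.a → e₁ = e₂ := by
    have hpw := (PSU.RTX.place_pairwise (X := X) b).2 forest 0 1
    have hpw' : E.Pairwise (fun e₁ e₂ : PSU.RTX.Ent X => e₁.a ≠ e₂.a) :=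
      hpw.imp (fun h => Nat.ne_of_lt h)
    intro e₁ he₁ e₂ he₂ haa
    by_contra hne
    exact (haveI : Std.Symm (fun e₁ e₂ : PSU.RTX.Ent X => e₁.a ≠ e₂.a) := ⟨fun _ _ h => Ne.symm h⟩; List.Pairwise.forall hpw' he₁ he₂ hne) haa
  refine ⟨fun x => lab (ent x), ?_, ?_, ?_⟩
  · -- injectivity
    intro x₁ x₂ hL
    obtain ⟨he₁, hx₁⟩ := hentE x₁
    obtain ⟨he₂, hx₂⟩ := hentE x₂
    obtain ⟨hf₁, hl₁, -, -⟩ := hwid _ he₁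
    obtain ⟨hf₂, hl₂, -, -⟩ := hwid _ he₂
    obtain ⟨-, -, -, haa⟩ := PSU.enc_inj hf₁ hl₁ hf₂ hl₂ hL
    have := hpos_inj _ he₁ _ he₂ haa
    rw [← hx₁, ← hx₂, this]
  · -- label size bound
    intro x
    obtain ⟨he, hx⟩ := hentE x
    obtain ⟨hf, hl, -, -⟩ := hwid _ he
    obtain ⟨-, hza, hz0⟩ := hbou _ he
    have ha : (ent x).a ≤ 8 * n - 1 := by omega
    have hbound : lab (ent x) < 8 * n * 2 ^ (3 * b + 7) := by
      show PSU.enc b (ent x).f ((ent x).lv - 1) (ent x).a < 8 * n * 2 ^ (3 * b + 7)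
      unfold PSU.enc
      have hb0 : (0:ℕ) < 2 ^ b := Nat.pow_pos (by norm_num)
      have s1 : (ent x).a * 2 ^ b + ((ent x).lv - 1) < ((ent x).a + 1) * 2 ^ b := by
        have hexp : ((ent x).a + 1) * 2 ^ b = (ent x).a * 2 ^ b + 2 ^ b := by ring
        omega
      have s2 : ((ent x).a * 2 ^ b + ((ent x).lv - 1)) * 2 ^ (b + 6) + (ent x).f
          < ((ent x).a + 1) * 2 ^ b * 2 ^ (b + 6) := by
        have : ((ent x).a * 2 ^ b + ((ent x).lv - 1)) * 2 ^ (b + 6) + (ent x).f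
            < ((ent x).a * 2 ^ b + ((ent x).lv - 1)) * 2 ^ (b + 6) + 2 ^ (b + 6) := by omega
        calc ((ent x).a * 2 ^ b + ((ent x).lv - 1)) * 2 ^ (b + 6) + (ent x).f
            < ((ent x).a * 2 ^ b + ((ent x).lv - 1) + 1) * 2 ^ (b + 6) := by
              have hexp : ((ent x).a * 2 ^ b + ((ent x).lv - 1) + 1) * 2 ^ (b + 6)
                  = ((ent x).a * 2 ^ b + ((ent x).lv - 1)) * 2 ^ (b + 6) + 2 ^ (b + 6) := by ring
              omega
          _ ≤ ((ent x).a + 1) * 2 ^ b * 2 ^ (b + 6) := by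
              apply Nat.mul_le_mul_right
              have hexp : ((ent x).a + 1) * 2 ^ b = (ent x).a * 2 ^ b + 2 ^ b := by ring
              omega
      have s3 : (((ent x).a * 2 ^ b + ((ent x).lv - 1)) * 2 ^ (b + 6) + (ent x).f) * 2 ^ (b + 1)
            + (2 ^ b - 1)
          < ((ent x).a + 1) * 2 ^ b * 2 ^ (b + 6) * 2 ^ (b + 1) := by
        have h1 : ((ent x).a * 2 ^ b + ((ent x).lv - 1)) * 2 ^ (b + 6) + (ent x).f + 1
            ≤ ((ent x).a + 1) * 2 ^ b * 2 ^ (b + 6) := s2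
        have h2 : (2 ^ b - 1) + 1 ≤ 2 ^ (b + 1) := by
          have := Nat.pow_le_pow_right (show 0 < 2 by norm_num) (show b ≤ b + 1 by omega)
          omega
        calc (((ent x).a * 2 ^ b + ((ent x).lv - 1)) * 2 ^ (b + 6) + (ent x).f) * 2 ^ (b + 1)
              + (2 ^ b - 1)
            < (((ent x).a * 2 ^ b + ((ent x).lv - 1)) * 2 ^ (b + 6) + (ent x).f + 1) * 2 ^ (b + 1) := by
              have hexp : (((ent x).a * 2 ^ b + ((ent x).lv - 1)) * 2 ^ (b + 6) + (ent x).f + 1) * 2 ^ (b + 1)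
                  = (((ent x).a * 2 ^ b + ((ent x).lv - 1)) * 2 ^ (b + 6) + (ent x).f) * 2 ^ (b + 1) + 2 ^ (b + 1) := by ring
              have : 0 < 2 ^ (b+1) := Nat.pow_pos (show 0 < 2 by norm_num)
              omega
          _ ≤ ((ent x).a + 1) * 2 ^ b * 2 ^ (b + 6) * 2 ^ (b + 1) := Nat.mul_le_mul_right _ h1
      have s4 : ((ent x).a + 1) * 2 ^ b * 2 ^ (b + 6) * 2 ^ (b + 1) ≤ 8 * n * 2 ^ (3 * b + 7) := by
        have e1 : (2:ℕ) ^ b * 2 ^ (b + 6) * 2 ^ (b + 1) = 2 ^ (3 * b + 7) := by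
          rw [← pow_add, ← pow_add]
          congr 1
          ring
        calc ((ent x).a + 1) * 2 ^ b * 2 ^ (b + 6) * 2 ^ (b + 1)
            = ((ent x).a + 1) * (2 ^ b * 2 ^ (b + 6) * 2 ^ (b + 1)) := by ring
          _ = ((ent x).a + 1) * 2 ^ (3 * b + 7) := by rw [e1]
          _ ≤ (8 * n) * 2 ^ (3 * b + 7) := by
              apply Nat.mul_le_mul_right
              omega
      omega
    have hfinal : 8 * n * 2 ^ (3 * b + 7) ≤ 8192 * n * d ^ 3 * (Nat.log 2 d) ^ 2 := by
      have e1 : (2:ℕ) ^ (3 * b + 7) = 128 * (2 ^ b) ^ 3 := by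
        rw [← pow_mul]
        rw [show 3 * b + 7 = b * 3 + 7 by ring]
        rw [pow_add]
        ring
      have e2 : (2 ^ b) ^ 3 ≤ (2 * d) ^ 3 := Nat.pow_le_pow_left h2b_le 3
      have e3 : (2 * d) ^ 3 = 8 * d ^ 3 := by ring
      have e4 : 1 ≤ (Nat.log 2 d) ^ 2 := by
        have h1 : 0 < Nat.log 2 d := Nat.log_pos (by norm_num) hd
        nlinarith
      calc 8 * n * 2 ^ (3 * b + 7) = 8 * n * (128 * (2 ^ b) ^ 3) := by rw [e1]
        _ ≤ 8 * n * (128 * (8 * d ^ 3)) := by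
            apply Nat.mul_le_mul_left
            apply Nat.mul_le_mul_left
            omega
        _ = 8192 * n * d ^ 3 := by ring
        _ ≤ 8192 * n * d ^ 3 * (Nat.log 2 d) ^ 2 := Nat.le_mul_of_pos_right _ (by omega)
    calc lab (ent x) ≤ 8 * n * 2 ^ (3 * b + 7) := le_of_lt hbound
      _ ≤ 8192 * n * d ^ 3 * (Nat.log 2 d) ^ 2 := hfinal
  · -- cover iff decoder
    intro u v
    obtain ⟨hev, hxv⟩ := hentE v
    obtain ⟨heu, hxu⟩ := hentE u
    rw [PSU.Dec_iff]
    rw [hCond _ hev _ heu, hCov _ hev _ heu, hxv, hxu]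

/-- A single decoder `D` gives a parenthood-labeling scheme for the family of
all rooted forests: any node of an `n`-node forest (`n ≥ 2`) of depth at most
`d` (`d ≥ 2`) gets a label bounded by `C · n · d³ · (log₂ d)²`, i.e. of
`log₂ n + 3 log₂ d + 2 log₂ log₂ d + O(1)` bits.  Here `u ⋖ v` means that `v`
covers `u`, i.e. `v` is the parent of `u`. -/
theorem parenthood_scheme_universal :
    ∃ (C : ℕ) (D : ℕ → ℕ → Bool),
      ∀ (X : Type) [Fintype X] [PartialOrder X], ∀ d : ℕ,
        IsTreeOrder X → 2 ≤ Fintype.card X → 2 ≤ d → HeightLE X d →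
        ∃ L : X → ℕ,
          Function.Injective L ∧
          (∀ x : X, L x ≤ C * Fintype.card X * d ^ 3 * (Nat.log 2 d) ^ 2) ∧
          (∀ u v : X, u ⋖ v ↔ D (L v) (L u) = true) :=
  parenthood_scheme_universal'
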